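/- (Leave-one-out cross-validation shortcut, equation (5.3).) Let n ≥ 2, let Φ be an n×n real symmetric positive definite matrix with Q = Φ⁻¹, let Y ∈ ℝⁿ and μ ∈ ℝⁿ. Fix an index i, and let Σ be the (n−1)×(n−1) principal submatrix of Φ obtained by deleting row i and column i, let c ∈ ℝ^{n-1} be column i of Φ with its i-th entry deleted, and let Y_{-i}, μ_{-i} be Y, μ with their i-th entries deleted. Then Q_{ii} > 0 and the leave-one-out conditional mean satisfies μ_i + cᵀ Σ⁻¹ (Y_{-i} − μ_{-i}) = μ_i − (1/Q_{ii}) ∑_{j ≠ i} Q_{ij} (Y_j − μ_j). -/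

import Mathlib

open Matrix

lemma posdef_submatrix {n m : ℕ} (A : Matrix (Fin n) (Fin n) ℝ) (hA : A.PosDef)
    (f : Fin m → Fin n) (hf : Function.Injective f) : (A.submatrix f f).PosDef := by
  rw [posDef_iff_dotProduct_mulVec]
  constructor
  · ext j k
    simpa [Matrix.submatrix, Matrix.conjTranspose] using congrFun (congrFun hA.1 (f j)) (f k)
  · intro x hx
    set y : Fin n → ℝ := Function.extend f x 0 with hy
    have hyx : ∀ j, y (f j) = x j := fun j => hf.extend_apply x 0 j
    have hy0 : y ≠ 0 := by
      intro h
      apply hx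
      ext j
      have := congrFun h (f j)
      simpa [hyx j] using this
    have key : star y ⬝ᵥ A *ᵥ y = star x ⬝ᵥ (A.submatrix f f) *ᵥ x := by
      simp only [dotProduct, mulVec, star, Pi.star_apply, star_trivial]
      have hsupp : ∀ k, y k ≠ 0 → ∃ j, f j = k := by
        intro k hk
        by_contra hcon
        push_neg at hcon
        apply hk
        simp [hy, Function.extend, hcon]
      rw [← Finset.sum_subset (Finset.subset_univ (Finset.univ.image f))]
      · rw [Finset.sum_image (fun a _ b _ h => hf h)]
        apply Finset.sum_congr rfl
        intro j _
        rw [hyx j]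
        congr 1
        rw [← Finset.sum_subset (Finset.subset_univ (Finset.univ.image f))]
        · rw [Finset.sum_image (fun a _ b _ h => hf h)]
          apply Finset.sum_congr rfl
          intro k _
          rw [hyx k]
          rfl
        · intro k _ hk
          have : y k = 0 := by
            by_contra h0
            obtain ⟨j', hj'⟩ := hsupp k h0
            exact hk (Finset.mem_image.mpr ⟨j', Finset.mem_univ _, hj'⟩)
          simp [this]
      · intro k _ hk
        have : y k = 0 := by
          by_contra h0
          obtain ⟨j', hj'⟩ := hsupp k h0
          exact hk (Finset.mem_image.mpr ⟨j', Finset.mem_univ _, hj'⟩)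
        simp [this]
    rw [← key]
    exact hA.dotProduct_mulVec_pos hy0

/-- LOOCV shortcut, equation (5.3): for a symmetric positive definite
`Φ` with `Q = Φ⁻¹`, the leave-one-out conditional mean satisfies
`μ_i + cᵀ Σ⁻¹ (Y_{-i} − μ_{-i}) = μ_i − (1/Q_{ii}) ∑_{j ≠ i} Q_{ij}(Y_j − μ_j)`,
where `Σ` is `Φ` with row and column `i` deleted and `c` is column `i` of `Φ`
with entry `i` deleted. -/
theorem stmt4 (n : ℕ) (hn : 1 ≤ n)
    (Φ : Matrix (Fin (n + 1)) (Fin (n + 1)) ℝ) (hΦsymm : Φ.IsSymm)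
    (hΦ : Φ.PosDef) (Q : Matrix (Fin (n + 1)) (Fin (n + 1)) ℝ) (hQ : Q = Φ⁻¹)
    (Y μ : Fin (n + 1) → ℝ) (i : Fin (n + 1))
    (S : Matrix (Fin n) (Fin n) ℝ)
    (hS : S = Φ.submatrix i.succAbove i.succAbove)
    (c : Fin n → ℝ) (hc : c = fun j => Φ (i.succAbove j) i) :
    0 < Q i i ∧
      μ i + c ⬝ᵥ S⁻¹ *ᵥ (Y ∘ i.succAbove - μ ∘ i.succAbove) =
        μ i - (1 / Q i i) * ∑ j ∈ Finset.univ.erase i, Q i j * (Y j - μ j) := by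
  have hQpd : Q.PosDef := by rw [hQ]; exact hΦ.inv
  have hQii : 0 < Q i i := by
    have := hQpd.dotProduct_mulVec_pos (x := Pi.single i 1) (by
      intro h
      have := congrFun h i
      simp [Pi.single_apply] at this)
    simpa [dotProduct, mulVec, Pi.single_apply, Finset.mul_sum] using this
  refine ⟨hQii, ?_⟩
  have hSpd : S.PosDef := hS ▸ posdef_submatrix Φ hΦ _ Fin.succAbove_right_injective
  have hSdet : IsUnit S.det := isUnit_iff_ne_zero.mpr hSpd.det_pos.ne'
  have hQΦ : Q * Φ = 1 := by rw [hQ]; exact Φ.nonsing_inv_mul (isUnit_iff_ne_zero.mpr hΦ.det_pos.ne')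
  -- the row vector r
  set r : Fin n → ℝ := fun j => Q i (i.succAbove j) with hr
  set v : Fin n → ℝ := Y ∘ i.succAbove - μ ∘ i.succAbove with hv
  -- key: r ᵥ* S = -(Q i i) • c
  have hkey : r ᵥ* S = (-(Q i i)) • c := by
    funext k
    have h1 : (Q * Φ) i (i.succAbove k) = 0 := by
      rw [hQΦ]
      simp [Matrix.one_apply, (Fin.succAbove_ne i k).symm]
    have h2 : ∑ j, Q i j * Φ j (i.succAbove k) = 0 := h1
    rw [Fin.sum_univ_succAbove (fun j => Q i j * Φ j (i.succAbove k)) i] at h2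
    have hsym : Φ i (i.succAbove k) = Φ (i.succAbove k) i := by
      have := congrFun (congrFun hΦsymm.symm i) (i.succAbove k)
      simpa [Matrix.transpose_apply] using this
    simp only [vecMul, dotProduct, Pi.smul_apply, smul_eq_mul, hS, hc,
      Matrix.submatrix_apply]
    have : ∑ j : Fin n, Q i (i.succAbove j) * Φ (i.succAbove j) (i.succAbove k)
        = -(Q i i * Φ (i.succAbove k) i) := by
      rw [← hsym]; linarith [h2]
    have : ∑ x : Fin n, r x * Φ (i.succAbove x) (i.succAbove k) = -(Q i i * Φ (i.succAbove k) i) := this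
    rw [this]; ring
  have hrSolve : r = ((-(Q i i)) • c) ᵥ* S⁻¹ := by
    rw [← hkey, Matrix.vecMul_vecMul, Matrix.mul_nonsing_inv S hSdet, Matrix.vecMul_one]
  -- rewrite the sum over erase i
  have hsum : ∑ j ∈ Finset.univ.erase i, Q i j * (Y j - μ j) = r ⬝ᵥ v := by
    have hfull : ∑ j, Q i j * (Y j - μ j)
        = Q i i * (Y i - μ i) + ∑ j : Fin n, Q i (i.succAbove j) * (Y (i.succAbove j) - μ (i.succAbove j)) :=
      Fin.sum_univ_succAbove _ i
    have herase : ∑ j ∈ Finset.univ.erase i, Q i j * (Y j - μ j)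
        = (∑ j, Q i j * (Y j - μ j)) - Q i i * (Y i - μ i) := by
      rw [← Finset.add_sum_erase _ _ (Finset.mem_univ i)]; ring
    rw [herase, hfull]
    simp only [dotProduct, hr, hv, Pi.sub_apply, Function.comp_apply]
    ring
  have hdot : r ⬝ᵥ v = -(Q i i) * (c ⬝ᵥ S⁻¹ *ᵥ v) := by
    rw [hrSolve, ← Matrix.dotProduct_mulVec]
    simp [smul_dotProduct]
  rw [hsum, hdot]
  field_simp
  ring
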